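/- Let q ≥ 2 be an integer, let n = q² + q + 1, and let L = (L₁,…,Lₙ) be a family of n blocks on the point set [n] = {1,…,n} such that every pair of distinct points of [n] is contained in some block and every block has at most q + 1 points. Then |L_k| = q + 1 for every k, and |L_i ∩ L_j| = 1 for all 1 ≤ i < j ≤ n; in particular, L is a projective plane of order q. -/
import Mathlib


/-- `B` is a projective plane of order `q`: a symmetric `(q²+q+1, q+1, 1)`-design,
i.e. `q²+q+1` blocks on `q²+q+1` points, each block of size `q+1`, and every pair
of distinct points contained in exactly one block. -/
def IsProjectivePlane (q : ℕ) (B : Fin (q^2+q+1) → Finset (Fin (q^2+q+1))) : Prop :=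
  (∀ i, (B i).card = q + 1) ∧
  ∀ x y : Fin (q^2+q+1), x ≠ y →
    (Finset.univ.filter fun i => x ∈ B i ∧ y ∈ B i).card = 1

/-- There exists a projective plane of order `q`. -/
def ExistsProjectivePlane (q : ℕ) : Prop := ∃ B, IsProjectivePlane q B

private lemma double_count {α β : Type*} (s : Finset α) (t : Finset β) (R : α → β → Prop)
    [∀ a b, Decidable (R a b)] :
    ∑ a ∈ s, (t.filter fun b => R a b).card = ∑ b ∈ t, (s.filter fun a => R a b).card := by
  simp_rw [Finset.card_filter]
  exact Finset.sum_comm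

private lemma mul_self_sub_self (c : ℕ) : c * c - c = c * (c - 1) := by
  cases c with
  | zero => simp
  | succ m => simp [Nat.mul_succ, Nat.succ_sub_one]

/-- Let `q ≥ 2`, `n = q² + q + 1`, and let `L = (L₁,…,Lₙ)` be a family of `n`
blocks on the point set `[n]` such that every pair of distinct points lies in
some block and every block has at most `q + 1` points. Then every block has
exactly `q + 1` points and any two distinct blocks meet in exactly one point;
in particular `L` is a projective plane of order `q`. -/
theorem two_covering_small_blocks_is_projective_plane (q : ℕ) (hq : 2 ≤ q)
    (L : Fin (q ^ 2 + q + 1) → Finset (Fin (q ^ 2 + q + 1)))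
    (hcov : ∀ x y : Fin (q ^ 2 + q + 1), x ≠ y → ∃ k, x ∈ L k ∧ y ∈ L k)
    (hbound : ∀ k, (L k).card ≤ q + 1) :
    (∀ k, (L k).card = q + 1) ∧
    (∀ i j : Fin (q ^ 2 + q + 1), i ≠ j → (L i ∩ L j).card = 1) ∧
    IsProjectivePlane q L := by
  have hq0 : 0 < q := by omega
  have hN : Fintype.card (Fin (q^2+q+1)) = q^2+q+1 := Fintype.card_fin _
  -- First double count: Σ_k |offDiag (L k)| = Σ_{pairs} #{k : pair ⊆ L k}
  have hterm : ∀ k : Fin (q^2+q+1),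
      ((Finset.univ : Finset (Fin (q^2+q+1))).offDiag.filter
        fun p => p.1 ∈ L k ∧ p.2 ∈ L k) = (L k).offDiag := by
    intro k
    ext p
    simp only [Finset.mem_filter, Finset.mem_offDiag, Finset.mem_univ, true_and]
    tauto
  have key : (∑ k : Fin (q^2+q+1), (L k).offDiag.card)
      = ∑ p ∈ (Finset.univ : Finset (Fin (q^2+q+1))).offDiag,
          (Finset.univ.filter fun k => p.1 ∈ L k ∧ p.2 ∈ L k).card := by
    have h := double_count (Finset.univ : Finset (Fin (q^2+q+1)))
      ((Finset.univ : Finset (Fin (q^2+q+1))).offDiag)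
      (fun k p => p.1 ∈ L k ∧ p.2 ∈ L k)
    simpa [hterm] using h
  have hoffcard : ((Finset.univ : Finset (Fin (q^2+q+1))).offDiag).card
      = (q^2+q+1) * ((q+1)*q) := by
    rw [Finset.offDiag_card, Finset.card_univ, hN]
    have : (q^2+q+1) * (q^2+q+1) = (q^2+q+1) * ((q+1)*q) + (q^2+q+1) := by ring
    omega
  have hub : ∀ k : Fin (q^2+q+1), (L k).offDiag.card ≤ (q+1)*q := by
    intro k
    rw [Finset.offDiag_card, mul_self_sub_self]
    exact Nat.mul_le_mul (hbound k) (by have := hbound k; omega)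
  have hlb : ∀ p ∈ (Finset.univ : Finset (Fin (q^2+q+1))).offDiag,
      1 ≤ (Finset.univ.filter fun k => p.1 ∈ L k ∧ p.2 ∈ L k).card := by
    intro p hp
    rw [Finset.mem_offDiag] at hp
    obtain ⟨k, hk⟩ := hcov p.1 p.2 hp.2.2
    exact Finset.card_pos.mpr ⟨k, Finset.mem_filter.mpr ⟨Finset.mem_univ _, hk⟩⟩
  have hconst : (∑ _k : Fin (q^2+q+1), (q+1)*q) = (q^2+q+1) * ((q+1)*q) := by
    rw [Finset.sum_const, Finset.card_univ, hN, smul_eq_mul]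
  have hS1 : (∑ k : Fin (q^2+q+1), (L k).offDiag.card) ≤ (q^2+q+1) * ((q+1)*q) := by
    calc (∑ k : Fin (q^2+q+1), (L k).offDiag.card)
        ≤ ∑ _k : Fin (q^2+q+1), (q+1)*q := Finset.sum_le_sum fun k _ => hub k
      _ = (q^2+q+1) * ((q+1)*q) := hconst
  have hS2 : (q^2+q+1) * ((q+1)*q)
      ≤ ∑ p ∈ (Finset.univ : Finset (Fin (q^2+q+1))).offDiag,
          (Finset.univ.filter fun k => p.1 ∈ L k ∧ p.2 ∈ L k).card := by
    calc (q^2+q+1) * ((q+1)*q)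
        = ∑ _p ∈ (Finset.univ : Finset (Fin (q^2+q+1))).offDiag, 1 := by
          rw [Finset.sum_const, hoffcard, smul_eq_mul, mul_one]
      _ ≤ _ := Finset.sum_le_sum hlb
  have hEq1 : (∑ k : Fin (q^2+q+1), (L k).offDiag.card) = (q^2+q+1) * ((q+1)*q) :=
    le_antisymm hS1 (key ▸ hS2)
  have hEq2 : (∑ p ∈ (Finset.univ : Finset (Fin (q^2+q+1))).offDiag,
      (Finset.univ.filter fun k => p.1 ∈ L k ∧ p.2 ∈ L k).card)
      = (q^2+q+1) * ((q+1)*q) := key ▸ hEq1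
  -- every block has exactly q+1 points
  have hcard : ∀ k, (L k).card = q + 1 := by
    intro k0
    by_contra hne
    have hk0 : (L k0).card ≤ q := by have := hbound k0; omega
    have hstrict : (L k0).offDiag.card < (q+1)*q := by
      rw [Finset.offDiag_card, mul_self_sub_self]
      have h1 : (L k0).card * ((L k0).card - 1) ≤ q * (q-1) :=
        Nat.mul_le_mul hk0 (by omega)
      have h2 : q * (q-1) < (q+1) * q := by
        have h3 : q * (q-1) ≤ q * q := Nat.mul_le_mul_left q (by omega)
        have h4 : (q+1) * q = q * q + q := by ring
        omega
      omega
    have hlt : (∑ k : Fin (q^2+q+1), (L k).offDiag.card)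
        < ∑ _k : Fin (q^2+q+1), (q+1)*q :=
      Finset.sum_lt_sum (fun k _ => hub k) ⟨k0, Finset.mem_univ _, hstrict⟩
    rw [hEq1, hconst] at hlt
    exact lt_irrefl _ hlt
  -- every pair of distinct points is in exactly one block
  have huniq : ∀ x y : Fin (q^2+q+1), x ≠ y →
      (Finset.univ.filter fun k => x ∈ L k ∧ y ∈ L k).card = 1 := by
    intro x y hxy
    by_contra hne
    have hmem : (x, y) ∈ (Finset.univ : Finset (Fin (q^2+q+1))).offDiag :=
      Finset.mem_offDiag.mpr ⟨Finset.mem_univ _, Finset.mem_univ _, hxy⟩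
    have h1 := hlb (x, y) hmem
    have h2 : 1 < (Finset.univ.filter fun k => (x, y).1 ∈ L k ∧ (x, y).2 ∈ L k).card := by
      simp only at h1 ⊢
      omega
    have hlt : (∑ _p ∈ (Finset.univ : Finset (Fin (q^2+q+1))).offDiag, 1)
        < ∑ p ∈ (Finset.univ : Finset (Fin (q^2+q+1))).offDiag,
            (Finset.univ.filter fun k => p.1 ∈ L k ∧ p.2 ∈ L k).card :=
      Finset.sum_lt_sum hlb ⟨(x, y), hmem, h2⟩
    rw [hEq2, Finset.sum_const, hoffcard, smul_eq_mul, mul_one] at hlt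
    exact lt_irrefl _ hlt
  -- two distinct blocks meet in at most one point
  have hle1 : ∀ i j : Fin (q^2+q+1), i ≠ j → (L i ∩ L j).card ≤ 1 := by
    intro i j hij
    by_contra h
    push_neg at h
    obtain ⟨x, hx, y, hy, hxy⟩ := Finset.one_lt_card.mp h
    rw [Finset.mem_inter] at hx hy
    have h2 : 1 < (Finset.univ.filter fun k => x ∈ L k ∧ y ∈ L k).card :=
      Finset.one_lt_card.mpr
        ⟨i, Finset.mem_filter.mpr ⟨Finset.mem_univ _, hx.1, hy.1⟩,
         j, Finset.mem_filter.mpr ⟨Finset.mem_univ _, hx.2, hy.2⟩, hij⟩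
    rw [huniq x y hxy] at h2
    exact lt_irrefl _ h2
  -- every point lies on exactly q+1 blocks
  have hlines : ∀ p : Fin (q^2+q+1),
      (Finset.univ.filter fun k => p ∈ L k).card = q + 1 := by
    intro p
    have hdc := double_count (Finset.univ : Finset (Fin (q^2+q+1)))
      (Finset.univ.erase p) (fun k y => p ∈ L k ∧ y ∈ L k)
    have hrhs : (∑ y ∈ Finset.univ.erase p,
        (Finset.univ.filter fun k => p ∈ L k ∧ y ∈ L k).card) = q^2 + q := by
      rw [Finset.sum_congr rfl (fun y hy =>
        huniq p y (Ne.symm (Finset.mem_erase.mp hy).1))]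
      rw [Finset.sum_const, Finset.card_erase_of_mem (Finset.mem_univ _),
        Finset.card_univ, hN, smul_eq_mul, mul_one]
      omega
    have hlhs : ∀ k : Fin (q^2+q+1),
        ((Finset.univ.erase p).filter fun y => p ∈ L k ∧ y ∈ L k).card
        = if p ∈ L k then q else 0 := by
      intro k
      by_cases hpk : p ∈ L k
      · have heq : ((Finset.univ.erase p).filter fun y => p ∈ L k ∧ y ∈ L k)
            = (L k).erase p := by
          ext y
          simp only [Finset.mem_filter, Finset.mem_erase, Finset.mem_univ, true_and]
          tauto
        rw [heq, if_pos hpk, Finset.card_erase_of_mem hpk, hcard k]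
        omega
      · rw [if_neg hpk]
        rw [Finset.card_eq_zero]
        ext y
        simp [hpk]
    rw [Finset.sum_congr rfl (fun k _ => hlhs k), hrhs] at hdc
    rw [← Finset.sum_filter, Finset.sum_const, smul_eq_mul] at hdc
    have : (Finset.univ.filter fun k => p ∈ L k).card * q = (q + 1) * q := by
      rw [hdc]; ring
    exact Nat.eq_of_mul_eq_mul_right hq0 this
  -- two distinct blocks meet in exactly one point
  have hint : ∀ i j : Fin (q^2+q+1), i ≠ j → (L i ∩ L j).card = 1 := by
    intro i j hij
    have h1 := Finset.card_inter_add_card_sdiff (L i) (L j)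
    rw [hcard i] at h1
    have hle := hle1 i j hij
    have hsd : 0 < (L i \ L j).card := by omega
    obtain ⟨p, hp⟩ := Finset.card_pos.mp hsd
    rw [Finset.mem_sdiff] at hp
    have hdc := double_count (Finset.univ.filter fun k => p ∈ L k) (L j)
      (fun k y => y ∈ L k)
    have hrhs : ∀ y ∈ L j,
        ((Finset.univ.filter fun k => p ∈ L k).filter fun k => y ∈ L k).card = 1 := by
      intro y hy
      rw [Finset.filter_filter]
      exact huniq p y (fun h => hp.2 (h ▸ hy))
    have hR : (∑ y ∈ L j,
        ((Finset.univ.filter fun k => p ∈ L k).filter fun k => y ∈ L k).card) = q + 1 := by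
      rw [Finset.sum_congr rfl hrhs, Finset.sum_const, hcard j, smul_eq_mul, mul_one]
    have hub2 : ∀ k ∈ Finset.univ.filter fun k => p ∈ L k,
        ((L j).filter fun y => y ∈ L k).card ≤ 1 := by
      intro k hk
      rw [Finset.mem_filter] at hk
      have hkj : k ≠ j := fun h => hp.2 (h ▸ hk.2)
      have heq : (L j).filter (fun y => y ∈ L k) = L k ∩ L j := by
        ext y
        simp only [Finset.mem_filter, Finset.mem_inter]
        tauto
      rw [heq]
      exact hle1 k j hkj
    have hi : i ∈ Finset.univ.filter fun k => p ∈ L k :=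
      Finset.mem_filter.mpr ⟨Finset.mem_univ _, hp.1⟩
    by_contra hne
    have h0 : ((L j).filter fun y => y ∈ L i).card < 1 := by
      have heq : (L j).filter (fun y => y ∈ L i) = L i ∩ L j := by
        ext y
        simp only [Finset.mem_filter, Finset.mem_inter]
        tauto
      rw [heq]
      omega
    have hlt : (∑ k ∈ Finset.univ.filter fun k => p ∈ L k,
          ((L j).filter fun y => y ∈ L k).card)
        < ∑ _k ∈ Finset.univ.filter fun k => p ∈ L k, 1 :=
      Finset.sum_lt_sum hub2 ⟨i, hi, h0⟩
    rw [hdc, hR, Finset.sum_const, smul_eq_mul, mul_one, hlines p] at hlt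
    exact lt_irrefl _ hlt
  exact ⟨hcard, hint, hcard, huniq⟩
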